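/- There is no graph isomorphism between the 4×4 Rook graph and the Shrikhande graph; i.e., these two strongly regular graphs with identical parameters (16, 6, 2, 2) are not isomorphic. -/

import Mathlib

/-- The 4×4 Rook graph: the box (Cartesian) product `K₄ □ K₄` of two complete graphs on
4 vertices. Its vertices are pairs `(a, b)` with `a b : Fin 4`, and `(a, b)` is adjacent
to `(c, d)` iff (`a = c` and `b ≠ d`) or (`b = d` and `a ≠ c`). -/
def rookGraph : SimpleGraph (Fin 4 × Fin 4) where
  Adj x y := (x.1 = y.1 ∧ x.2 ≠ y.2) ∨ (x.2 = y.2 ∧ x.1 ≠ y.1)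
  symm := by
    constructor
    rintro x y (⟨h1, h2⟩ | ⟨h1, h2⟩)
    · exact Or.inl ⟨h1.symm, h2.symm⟩
    · exact Or.inr ⟨h1.symm, h2.symm⟩
  loopless := by
    constructor
    rintro x (⟨-, h⟩ | ⟨-, h⟩) <;> exact h rfl

instance : DecidableRel rookGraph.Adj := fun x y =>
  inferInstanceAs (Decidable ((x.1 = y.1 ∧ x.2 ≠ y.2) ∨ (x.2 = y.2 ∧ x.1 ≠ y.1)))

/-- The connection set of the Shrikhande graph:
`S = {(1,0), (−1,0), (0,1), (0,−1), (1,1), (−1,−1)} ⊆ (ZMod 4) × (ZMod 4)`. -/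
def shrikhandeS : Finset (ZMod 4 × ZMod 4) :=
  {(1, 0), (-1, 0), (0, 1), (0, -1), (1, 1), (-1, -1)}

/-- The Shrikhande graph: the Cayley graph on the group `(ZMod 4) × (ZMod 4)` with
connection set `S = {(1,0), (−1,0), (0,1), (0,−1), (1,1), (−1,−1)}`; `x` is adjacent to
`y` iff `x - y ∈ S`. -/
def shrikhandeGraph : SimpleGraph (ZMod 4 × ZMod 4) where
  Adj x y := x - y ∈ shrikhandeS
  symm := by
    constructor
    intro x y h
    beta_reduce at h ⊢
    have hxy : y - x = -(x - y) := (neg_sub x y).symm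
    rw [hxy]
    revert h
    have : ∀ z ∈ shrikhandeS, -z ∈ shrikhandeS := by decide
    exact this (x - y)
  loopless := by
    constructor
    intro x h
    beta_reduce at h
    rw [sub_self] at h
    revert h
    decide

instance : DecidableRel shrikhandeGraph.Adj := fun x y =>
  inferInstanceAs (Decidable (x - y ∈ shrikhandeS))

set_option maxHeartbeats 4000000 in
lemma shrikhande_no_K4 : ∀ a b c d : ZMod 4 × ZMod 4,
    ¬(shrikhandeGraph.Adj a b ∧ shrikhandeGraph.Adj a c ∧ shrikhandeGraph.Adj a d ∧
      shrikhandeGraph.Adj b c ∧ shrikhandeGraph.Adj b d ∧ shrikhandeGraph.Adj c d) := by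
  decide

/-- There is no graph isomorphism between the 4×4 Rook graph and the
Shrikhande graph: these two strongly regular graphs with identical parameters
`(16, 6, 2, 2)` are not isomorphic. -/
theorem rook_not_iso_shrikhande : ¬ Nonempty (rookGraph ≃g shrikhandeGraph) := by
  rintro ⟨f⟩
  have adj : ∀ i j : Fin 4, i ≠ j → rookGraph.Adj (0, i) (0, j) := by decide
  exact shrikhande_no_K4 (f (0,0)) (f (0,1)) (f (0,2)) (f (0,3))
    ⟨f.map_adj_iff.2 (adj 0 1 (by decide)), f.map_adj_iff.2 (adj 0 2 (by decide)),
     f.map_adj_iff.2 (adj 0 3 (by decide)), f.map_adj_iff.2 (adj 1 2 (by decide)),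
     f.map_adj_iff.2 (adj 1 3 (by decide)), f.map_adj_iff.2 (adj 2 3 (by decide))⟩
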